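/- Let K be an orthogonal projection on ℓ²(X) and b ∈ ℓ¹(X) a summable function. Then the operator bK (multiplication by b composed with K) is trace class, and its trace tr(bK) = Σ_x b(x) K(x,x) depends continuously on K in the weak operator topology on the set of projections: if K_n → K weakly then tr(bK_n) → tr(bK). -/

import Mathlib

open Filter
open scoped ComplexInnerProductSpace

noncomputable section

variable {X : Type*} [DecidableEq X]

/-- The canonical basis vector `e_x` of `ℓ²(X)`. -/
def basisVec (x : X) : lp (fun _ : X => ℂ) 2 := lp.single 2 x 1

lemma norm_basisVec (x : X) : ‖basisVec x‖ = 1 := by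
  have := lp.norm_single (p := (2 : ENNReal)) (E := fun _ : X => ℂ) (by norm_num)
    x (1 : ℂ)
  simpa [basisVec] using this

lemma diag_bound (K : lp (fun _ : X => ℂ) 2 →L[ℂ] lp (fun _ : X => ℂ) 2)
    (hK : IsSelfAdjoint K) (hKi : K ∘L K = K) (v : lp (fun _ : X => ℂ) 2) :
    ‖⟪v, K v⟫‖ ≤ ‖v‖ ^ 2 := by
  have hadj : ∀ u w : lp (fun _ : X => ℂ) 2, ⟪K u, w⟫ = ⟪u, K w⟫ := by
    intro u w
    conv_lhs => rw [← hK.adjoint_eq]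
    exact ContinuousLinearMap.adjoint_inner_left K w u
  have h1 : ⟪v, K v⟫ = ⟪K v, K v⟫ := by
    conv_lhs => rw [← hKi]
    rw [hadj]
    rfl
  have h2 : ‖⟪v, K v⟫‖ = ‖K v‖ ^ 2 := by
    rw [h1, @inner_self_eq_norm_sq_to_K ℂ]
    simp [sq_abs]
  have h3 : ‖⟪v, K v⟫‖ ≤ ‖v‖ * ‖K v‖ := norm_inner_le_norm v (K v)
  have h4 : ‖K v‖ ≤ ‖v‖ := by nlinarith [norm_nonneg (K v), norm_nonneg v, h2 ▸ h3]
  rw [h2]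
  nlinarith [norm_nonneg (K v), norm_nonneg v]

/-- For `b ∈ ℓ¹(X)` and an orthogonal projection `K` on `ℓ²(X)`, the diagonal series
`tr(bK) = Σ_x b(x) K(x,x)` converges absolutely (`bK` is trace class), and the trace
depends continuously on `K` in the weak operator topology on the set of projections. -/
theorem stmt14 (b : X → ℂ) (hb : Summable fun x => ‖b x‖)
    (K : lp (fun _ : X => ℂ) 2 →L[ℂ] lp (fun _ : X => ℂ) 2)
    (hK : IsSelfAdjoint K) (hKi : K ∘L K = K)
    (Kn : ℕ → lp (fun _ : X => ℂ) 2 →L[ℂ] lp (fun _ : X => ℂ) 2)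
    (hKn : ∀ n, IsSelfAdjoint (Kn n)) (hKni : ∀ n, Kn n ∘L Kn n = Kn n)
    (hwot : ∀ u v : lp (fun _ : X => ℂ) 2,
      Tendsto (fun n => ⟪u, Kn n v⟫) atTop (nhds ⟪u, K v⟫)) :
    Summable (fun x => ‖b x * ⟪basisVec x, K (basisVec x)⟫‖) ∧
    Tendsto (fun n => ∑' x : X, b x * ⟪basisVec x, Kn n (basisVec x)⟫) atTop
      (nhds (∑' x : X, b x * ⟪basisVec x, K (basisVec x)⟫)) := by
  have hbound : ∀ (L : lp (fun _ : X => ℂ) 2 →L[ℂ] lp (fun _ : X => ℂ) 2),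
      IsSelfAdjoint L → L ∘L L = L → ∀ x : X,
      ‖b x * ⟪basisVec x, L (basisVec x)⟫‖ ≤ ‖b x‖ := by
    intro L hL hLi x
    rw [norm_mul]
    calc ‖b x‖ * ‖⟪basisVec x, L (basisVec x)⟫‖
        ≤ ‖b x‖ * (‖basisVec x‖ ^ 2) := by
          exact mul_le_mul_of_nonneg_left (diag_bound L hL hLi _) (norm_nonneg _)
      _ = ‖b x‖ := by rw [norm_basisVec]; ring
  constructor
  · exact Summable.of_nonneg_of_le (fun x => norm_nonneg _) (hbound K hK hKi) hb
  · refine tendsto_tsum_of_dominated_convergence hb (fun x => ?_) ?_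
    · exact Tendsto.const_mul (b x) (hwot (basisVec x) (basisVec x))
    · exact Eventually.of_forall fun n x => hbound (Kn n) (hKn n) (hKni n) x

end
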